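/- For every x > 0 and every t ≥ 0, the expectation of the capital-per-capita process satisfies E[X^x_t] ≤ 2^{η−1} (x + t^η). -/

import Mathlib

open MeasureTheory Real Set Filter
open scoped NNReal ENNReal

lemma my_add_rpow_le (a b p : ℝ) (ha : 0 ≤ a) (hb : 0 ≤ b) (hp : 1 ≤ p) :
    (a + b) ^ p ≤ 2 ^ (p - 1) * (a ^ p + b ^ p) := by
  calc (a + b) ^ p = ((a.toNNReal + b.toNNReal : ℝ≥0) : ℝ) ^ p := by
        rw [NNReal.coe_add, Real.coe_toNNReal _ ha, Real.coe_toNNReal _ hb]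
    _ = (((a.toNNReal + b.toNNReal) ^ p : ℝ≥0) : ℝ) := by rw [NNReal.coe_rpow]
    _ ≤ (((2 : ℝ≥0) ^ (p - 1) * (a.toNNReal ^ p + b.toNNReal ^ p) : ℝ≥0) : ℝ) :=
        NNReal.coe_le_coe.2 (NNReal.rpow_add_le_mul_rpow_add_rpow _ _ hp)
    _ = 2 ^ (p - 1) * (a ^ p + b ^ p) := by
        push_cast [NNReal.coe_rpow, Real.coe_toNNReal _ ha, Real.coe_toNNReal _ hb]
        norm_num

lemma my_gauss_mgf (v : ℝ≥0) (a : ℝ) :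
    ∫⁻ x, ENNReal.ofReal (Real.exp (a * x)) ∂(ProbabilityTheory.gaussianReal 0 v)
      = ENNReal.ofReal (Real.exp (a ^ 2 * v / 2)) := by
  rcases eq_or_ne v 0 with rfl | hv
  · rw [ProbabilityTheory.gaussianReal_zero_var]
    simp [lintegral_dirac]
  · have hv0 : (0 : ℝ) < v := by positivity
    have h2v : (0 : ℝ) < (2 * (v:ℝ))⁻¹ := by positivity
    have key : ∀ x : ℝ, ProbabilityTheory.gaussianPDFReal 0 v x * Real.exp (a * x)
        = Real.exp (a ^ 2 * v / 2) *
          ((Real.sqrt (2 * Real.pi * v))⁻¹ * Real.exp (-(2 * (v:ℝ))⁻¹ * (x - a * v) ^ 2)) := by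
      intro x
      have h1 : -(x - 0) ^ 2 / (2 * (v:ℝ)) + a * x
          = a ^ 2 * v / 2 + -(2 * (v:ℝ))⁻¹ * (x - a * v) ^ 2 := by
        field_simp
        ring
      rw [ProbabilityTheory.gaussianPDFReal, mul_assoc, ← Real.exp_add, h1, Real.exp_add,
        mul_left_comm]
    have hInt : Integrable (fun x => ProbabilityTheory.gaussianPDFReal 0 v x * Real.exp (a * x)) := by
      simp only [key]
      exact (((integrable_exp_neg_mul_sq h2v).comp_sub_right (a * v)).const_mul _).const_mul _
    have hmeas : Measurable fun x : ℝ => ENNReal.ofReal (rexp (a * x)) := by fun_prop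
    rw [ProbabilityTheory.gaussianReal_of_var_ne_zero _ hv,
      lintegral_withDensity_eq_lintegral_mul _ (ProbabilityTheory.measurable_gaussianPDF _ _)
        hmeas]
    have : ∀ x : ℝ, (ProbabilityTheory.gaussianPDF 0 v * fun x => ENNReal.ofReal (rexp (a * x))) x
        = ENNReal.ofReal (ProbabilityTheory.gaussianPDFReal 0 v x * rexp (a * x)) := by
      intro x
      rw [Pi.mul_apply, ProbabilityTheory.gaussianPDF,
        ← ENNReal.ofReal_mul (ProbabilityTheory.gaussianPDFReal_nonneg _ _ _)]
    simp only [this]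
    rw [← ofReal_integral_eq_lintegral_ofReal hInt (ae_of_all _ fun x =>
      mul_nonneg (ProbabilityTheory.gaussianPDFReal_nonneg _ _ _) (Real.exp_pos _).le)]
    congr 1
    simp only [key]
    rw [integral_const_mul, integral_const_mul,
      integral_sub_right_eq_self (fun y => Real.exp (-(2 * (v:ℝ))⁻¹ * y ^ 2)) (a * v),
      integral_gaussian]
    have h3 : Real.pi / (2 * (v:ℝ))⁻¹ = 2 * Real.pi * v := by field_simp
    rw [h3]
    have hs : Real.sqrt (2 * Real.pi * v) ≠ 0 := by positivity
    field_simp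

/-- Moment estimate `E[X^x_t] ≤ 2^(η-1) (x + t^η)` for the capital-per-capita process
in the stochastic Ramsey problem with Cobb-Douglas production. -/
theorem ramsey_first_moment_estimate
    {Ω : Type*} [MeasurableSpace Ω] (P : Measure Ω) [IsProbabilityMeasure P]
    (α μ σ η : ℝ) (hα0 : 0 < α) (hα1 : α < 1) (hμ : 0 < μ) (hσ : 0 < σ)
    (hη : η = 1 / (1 - α))
    (W : ℝ → Ω → ℝ)
    (hWmeas : Measurable (Function.uncurry W))
    (hW0 : ∀ᵐ ω ∂P, W 0 ω = 0)
    (hWgauss : ∀ s t : ℝ, 0 ≤ s → s ≤ t →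
      P.map (fun ω => W t ω - W s ω) =
        ProbabilityTheory.gaussianReal 0 (Real.toNNReal (t - s)))
    (c : ℝ → Ω → ℝ)
    (hcmeas : Measurable (Function.uncurry c))
    (hcnonneg : ∀ t ω, 0 ≤ c t ω)
    (hcint : ∀ᵐ ω ∂P, ∀ t ≥ (0 : ℝ), IntegrableOn (fun s => c s ω) (Ioc 0 t))
    (G : ℝ → Ω → ℝ)
    (hG : ∀ t ω, G t ω =
      Real.exp ((∫ s in Ioc (0 : ℝ) t, (1 - α) * (μ + c s ω + σ ^ 2 / 2))
        + (1 - α) * σ * W t ω))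
    (X : ℝ → ℝ → Ω → ℝ)
    (hX : ∀ x t ω, X x t ω =
      (G t ω) ^ (-η) * (x ^ (1 - α) + (1 - α) * ∫ s in Ioc (0 : ℝ) t, G s ω) ^ η) :
    ∀ x > (0 : ℝ), ∀ t ≥ (0 : ℝ),
      ∫⁻ ω, ENNReal.ofReal (X x t ω) ∂P
        ≤ ENNReal.ofReal ((2 : ℝ) ^ (η - 1) * (x + t ^ η)) := by
  intro x hx t ht
  have hα' : (0:ℝ) < 1 - α := by linarith
  have hηα : η * (1 - α) = 1 := by rw [hη]; field_simp
  have hη1 : 1 < η := by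
    rw [hη, lt_div_iff₀ hα']; linarith
  have hηpos : (0:ℝ) < η := by linarith
  have hGpos : ∀ r ω, 0 < G r ω := fun r ω => by rw [hG]; exact Real.exp_pos _
  -- measurability of W sections
  have measWr : ∀ r : ℝ, Measurable fun ω => W r ω := fun r =>
    hWmeas.comp (measurable_const.prodMk measurable_id)
  -- joint measurability of the drift integral
  have measJ : Measurable fun p : ℝ × Ω =>
      ∫ u in Ioc (0:ℝ) p.1, (1 - α) * (μ + c u p.2 + σ ^ 2 / 2) := by
    have hA : MeasurableSet {q : (ℝ × Ω) × ℝ | q.2 ∈ Ioc 0 q.1.1} := by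
      apply MeasurableSet.inter
      · exact measurableSet_lt measurable_const measurable_snd
      · exact measurableSet_le measurable_snd (measurable_fst.comp measurable_fst)
    have hm : Measurable fun q : (ℝ × Ω) × ℝ => (1 - α) * (μ + c q.2 q.1.2 + σ ^ 2 / 2) := by
      apply Measurable.const_mul
      apply Measurable.add_const
      apply Measurable.const_add
      exact hcmeas.comp (measurable_snd.prodMk (measurable_snd.comp measurable_fst))
    have hf : StronglyMeasurable fun q : (ℝ × Ω) × ℝ =>
        Set.indicator {q : (ℝ × Ω) × ℝ | q.2 ∈ Ioc 0 q.1.1}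
          (fun q => (1 - α) * (μ + c q.2 q.1.2 + σ ^ 2 / 2)) q :=
      (hm.indicator hA).stronglyMeasurable
    have h2 := hf.integral_prod_right' (ν := volume)
    have heq : (fun p : ℝ × Ω => ∫ u in Ioc (0:ℝ) p.1, (1 - α) * (μ + c u p.2 + σ ^ 2 / 2))
        = fun p : ℝ × Ω => ∫ u, Set.indicator {q : (ℝ × Ω) × ℝ | q.2 ∈ Ioc 0 q.1.1}
          (fun q => (1 - α) * (μ + c q.2 q.1.2 + σ ^ 2 / 2)) (p, u) := by
      funext p
      rw [← integral_indicator measurableSet_Ioc]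
      refine integral_congr_ae (ae_of_all _ fun u => ?_)
      by_cases hu : 0 < u ∧ u ≤ p.1 <;> simp [Set.indicator_apply, Set.mem_Ioc, hu]
    rw [heq]
    exact h2.measurable
  -- joint measurability of G
  have measG : Measurable (Function.uncurry G) := by
    have : Function.uncurry G = fun p : ℝ × Ω =>
        Real.exp ((∫ u in Ioc (0:ℝ) p.1, (1 - α) * (μ + c u p.2 + σ ^ 2 / 2))
          + (1 - α) * σ * W p.1 p.2) := by
      funext p
      exact hG p.1 p.2
    rw [this]
    exact (measJ.add (hWmeas.const_mul _)).exp
  have measGr : ∀ r : ℝ, Measurable fun ω => G r ω := fun r =>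
    measG.comp (measurable_const.prodMk measurable_id)
  have measGω : ∀ ω, Measurable fun s => G s ω := fun ω =>
    measG.comp (measurable_id.prodMk measurable_const)
  -- the key ratio estimate
  have hratio : ∀ a b : ℝ, 0 ≤ a → a ≤ b →
      ∫⁻ ω, ENNReal.ofReal (G a ω ^ η * G b ω ^ (-η)) ∂P ≤ 1 := by
    intro a b ha hab
    have hb : (0:ℝ) ≤ b := ha.trans hab
    have hpt : ∀ᵐ ω ∂P, G a ω ^ η * G b ω ^ (-η)
        ≤ rexp (-(σ^2/2) * (b - a)) * rexp (-σ * (W b ω - W a ω)) := by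
      filter_upwards [hcint] with ω hint
      have hconst : ∀ (C : ℝ) (u v : ℝ), IntegrableOn (fun _ : ℝ => C) (Ioc u v) :=
        fun C u v => integrableOn_const measure_Ioc_lt_top.ne
      have hginta : IntegrableOn (fun u => μ + c u ω + σ ^ 2 / 2) (Ioc 0 b) :=
        ((hconst μ 0 b).add (hint b hb)).add (hconst _ 0 b)
      have hgint : ∀ u v : ℝ, Ioc u v ⊆ Ioc 0 b →
          IntegrableOn (fun u => μ + c u ω + σ ^ 2 / 2) (Ioc u v) :=
        fun u v hsub => hginta.mono_set hsub
      have hfint : ∀ u v : ℝ, Ioc u v ⊆ Ioc 0 b →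
          IntegrableOn (fun u => (1 - α) * (μ + c u ω + σ ^ 2 / 2)) (Ioc u v) :=
        fun u v hsub => (hgint u v hsub).const_mul _
      have hsub1 : Ioc (0:ℝ) a ⊆ Ioc 0 b := Ioc_subset_Ioc_right hab
      have hsub2 : Ioc a b ⊆ Ioc (0:ℝ) b := Ioc_subset_Ioc_left ha
      have hsplit : (∫ u in Ioc (0:ℝ) b, (1 - α) * (μ + c u ω + σ ^ 2 / 2))
          = (∫ u in Ioc (0:ℝ) a, (1 - α) * (μ + c u ω + σ ^ 2 / 2))
            + ∫ u in Ioc a b, (1 - α) * (μ + c u ω + σ ^ 2 / 2) := by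
        rw [← Set.Ioc_union_Ioc_eq_Ioc ha hab]
        exact setIntegral_union (Ioc_disjoint_Ioc_of_le le_rfl) measurableSet_Ioc
          (hfint 0 a hsub1) (hfint a b hsub2)
      have hpull : (∫ u in Ioc a b, (1 - α) * (μ + c u ω + σ ^ 2 / 2))
          = (1 - α) * ∫ u in Ioc a b, (μ + c u ω + σ ^ 2 / 2) := by
        exact integral_const_mul _ _
      have hlow : σ ^ 2 / 2 * (b - a) ≤ ∫ u in Ioc a b, (μ + c u ω + σ ^ 2 / 2) := by
        have h1 : (∫ _ in Ioc a b, (σ ^ 2 / 2 : ℝ)) = σ ^ 2 / 2 * (b - a) := by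
          rw [setIntegral_const, Real.volume_real_Ioc, max_eq_left (by linarith),
            smul_eq_mul, mul_comm]
        rw [← h1]
        refine setIntegral_mono_on (hconst _ a b) (hgint a b hsub2) measurableSet_Ioc ?_
        intro u _
        have := hcnonneg u ω
        linarith
      rw [hG a ω, hG b ω, ← Real.exp_mul, ← Real.exp_mul, ← Real.exp_add, ← Real.exp_add]
      rw [Real.exp_le_exp]
      have hexp_eq : ((∫ u in Ioc (0:ℝ) a, (1 - α) * (μ + c u ω + σ ^ 2 / 2))
            + (1 - α) * σ * W a ω) * η
          + ((∫ u in Ioc (0:ℝ) b, (1 - α) * (μ + c u ω + σ ^ 2 / 2))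
            + (1 - α) * σ * W b ω) * (-η)
          = -(∫ u in Ioc a b, (μ + c u ω + σ ^ 2 / 2))
            + σ * (W a ω - W b ω) := by
        rw [hsplit, hpull]
        linear_combination (σ * (W a ω - W b ω) - (∫ u in Ioc a b, (μ + c u ω + σ ^ 2 / 2))) * hηα
      rw [hexp_eq]
      linarith
    calc ∫⁻ ω, ENNReal.ofReal (G a ω ^ η * G b ω ^ (-η)) ∂P
        ≤ ∫⁻ ω, ENNReal.ofReal (rexp (-(σ^2/2) * (b - a)) * rexp (-σ * (W b ω - W a ω))) ∂P :=
          lintegral_mono_ae (hpt.mono fun ω h => ENNReal.ofReal_le_ofReal h)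
      _ = ENNReal.ofReal (rexp (-(σ^2/2) * (b - a)))
            * ∫⁻ ω, ENNReal.ofReal (rexp (-σ * (W b ω - W a ω))) ∂P := by
          simp_rw [ENNReal.ofReal_mul (Real.exp_pos _).le]
          exact lintegral_const_mul' _ _ ENNReal.ofReal_ne_top
      _ = ENNReal.ofReal (rexp (-(σ^2/2) * (b - a)))
            * ENNReal.ofReal (rexp ((-σ) ^ 2 * (((b - a).toNNReal : ℝ≥0) : ℝ) / 2)) := by
          congr 1
          have hm : Measurable fun ω => W b ω - W a ω := (measWr b).sub (measWr a)
          have hg : Measurable fun y : ℝ => ENNReal.ofReal (rexp (-σ * y)) := by fun_prop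
          have hmap := lintegral_map hg hm (μ := P)
          rw [← hmap, hWgauss a b ha hab, my_gauss_mgf]
      _ = 1 := by
          rw [← ENNReal.ofReal_mul (Real.exp_pos _).le, ← Real.exp_add,
            Real.coe_toNNReal _ (sub_nonneg.2 hab)]
          have : -(σ^2/2) * (b - a) + (-σ) ^ 2 * (b - a) / 2 = 0 := by ring
          rw [this, Real.exp_zero, ENNReal.ofReal_one]
  -- notation
  set I : Ω → ℝ := fun ω => ∫ s in Ioc (0:ℝ) t, G s ω with hIdef
  have hInn : ∀ ω, 0 ≤ I ω := fun ω =>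
    setIntegral_nonneg measurableSet_Ioc fun s _ => (hGpos s ω).le
  set f1 : Ω → ℝ≥0∞ := fun ω => ENNReal.ofReal (G t ω ^ (-η)) with hf1def
  set f2 : Ω → ℝ≥0∞ := fun ω => ENNReal.ofReal (I ω ^ η * G t ω ^ (-η)) with hf2def
  -- pointwise bound, real version
  have hpointR : ∀ ω, X x t ω
      ≤ 2 ^ (η - 1) * (x * G t ω ^ (-η) + (1 - α) ^ η * (I ω ^ η * G t ω ^ (-η))) := by
    intro ω
    have hGt := hGpos t ω
    have hGtneg : (0:ℝ) < G t ω ^ (-η) := Real.rpow_pos_of_pos hGt _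
    have key := my_add_rpow_le (x ^ (1 - α)) ((1 - α) * I ω) η
      (Real.rpow_nonneg hx.le _) (mul_nonneg hα'.le (hInn ω)) hη1.le
    have h2 : (x ^ (1 - α)) ^ η = x := by
      rw [← Real.rpow_mul hx.le]
      have : (1 - α) * η = 1 := by linarith [hηα, mul_comm η (1 - α)]
      rw [this, Real.rpow_one]
    have h3 : ((1 - α) * I ω) ^ η = (1 - α) ^ η * I ω ^ η :=
      Real.mul_rpow hα'.le (hInn ω)
    rw [hX]
    calc G t ω ^ (-η) * (x ^ (1 - α) + (1 - α) * I ω) ^ η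
        ≤ G t ω ^ (-η) * (2 ^ (η - 1) * ((x ^ (1 - α)) ^ η + ((1 - α) * I ω) ^ η)) :=
          mul_le_mul_of_nonneg_left key hGtneg.le
      _ = 2 ^ (η - 1) * (x * G t ω ^ (-η) + (1 - α) ^ η * (I ω ^ η * G t ω ^ (-η))) := by
          rw [h2, h3]; ring
  -- pointwise bound, ENNReal version
  have hpoint : ∀ ω, ENNReal.ofReal (X x t ω)
      ≤ ENNReal.ofReal (2 ^ (η - 1)) *
        (ENNReal.ofReal x * f1 ω + ENNReal.ofReal ((1 - α) ^ η) * f2 ω) := by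
    intro ω
    have hGtneg : (0:ℝ) ≤ G t ω ^ (-η) := (Real.rpow_pos_of_pos (hGpos t ω) _).le
    refine le_trans (ENNReal.ofReal_le_ofReal (hpointR ω)) (le_of_eq ?_)
    rw [ENNReal.ofReal_mul (by positivity),
      ENNReal.ofReal_add (mul_nonneg hx.le hGtneg)
        (mul_nonneg (Real.rpow_nonneg hα'.le _)
          (mul_nonneg (Real.rpow_nonneg (hInn ω) _) hGtneg)),
      ENNReal.ofReal_mul hx.le, ENNReal.ofReal_mul (Real.rpow_nonneg hα'.le _)]
  have mr : ∀ e : ℝ, Measurable fun y : ℝ => y ^ e := fun e => by fun_prop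
  -- measurability of f1
  have measf1 : Measurable f1 := by
    apply Measurable.ennreal_ofReal
    exact (mr (-η)).comp (measGr t)
  -- G 0 = 1 a.e.
  have hG0 : ∀ᵐ ω ∂P, G 0 ω = 1 := by
    filter_upwards [hW0] with ω h0
    rw [hG]
    simp [h0, Set.Ioc_self]
  -- first expectation bound
  have hT1 : ∫⁻ ω, f1 ω ∂P ≤ 1 := by
    have heq : ∫⁻ ω, f1 ω ∂P = ∫⁻ ω, ENNReal.ofReal (G 0 ω ^ η * G t ω ^ (-η)) ∂P := by
      refine lintegral_congr_ae ?_
      filter_upwards [hG0] with ω h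
      rw [h, Real.one_rpow, one_mul]
    rw [heq]
    exact hratio 0 t le_rfl ht
  -- Hölder pointwise step
  have hconj : η.HolderConjugate α⁻¹ := by
    have := Real.HolderConjugate.one_sub_inv_inv hα0 hα1
    rwa [hη, one_div]
  have hαη : α * η = η - 1 := by linear_combination -hηα
  have holder : ∀ ω, f2 ω ≤ (ENNReal.ofReal t) ^ (η - 1)
      * ∫⁻ s in Ioc (0:ℝ) t, ENNReal.ofReal (G s ω ^ η * G t ω ^ (-η)) := by
    intro ω
    have hGtneg : (0:ℝ) ≤ G t ω ^ (-η) := (Real.rpow_pos_of_pos (hGpos t ω) _).le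
    set L : ℝ≥0∞ := ∫⁻ s in Ioc (0:ℝ) t, ENNReal.ofReal (G s ω) with hLdef
    have hmeasf : AEMeasurable (fun s => ENNReal.ofReal (G s ω))
        (volume.restrict (Ioc (0:ℝ) t)) := ((measGω ω).ennreal_ofReal).aemeasurable
    -- step 1 : ofReal I ≤ L
    have step1 : ENNReal.ofReal (I ω) ≤ L := by
      by_cases hInt : IntegrableOn (fun s => G s ω) (Ioc (0:ℝ) t) volume
      · exact le_of_eq (ofReal_integral_eq_lintegral_ofReal hInt
          (ae_of_all _ fun s => (hGpos s ω).le))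
      · rw [hIdef]
        simp only [integral_undef hInt]
        simp
    -- step 2 : Hölder
    have step2 : L ^ η ≤ (ENNReal.ofReal t) ^ (η - 1)
        * ∫⁻ s in Ioc (0:ℝ) t, (ENNReal.ofReal (G s ω)) ^ η := by
      have hH := ENNReal.lintegral_mul_le_Lp_mul_Lq (volume.restrict (Ioc (0:ℝ) t)) hconj
        hmeasf aemeasurable_const (g := fun _ => 1)
      simp only [Pi.mul_apply, Pi.one_apply, mul_one, ENNReal.one_rpow, lintegral_const,
        Measure.restrict_apply, MeasurableSet.univ, Set.univ_inter, Real.volume_Ioc,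
        sub_zero, one_mul] at hH
      have hH2 := ENNReal.rpow_le_rpow hH hηpos.le
      rw [ENNReal.mul_rpow_of_nonneg _ _ hηpos.le, ← ENNReal.rpow_mul, ← ENNReal.rpow_mul,
        one_div, inv_mul_cancel₀ hηpos.ne', ENNReal.rpow_one] at hH2
      have hq : (α⁻¹)⁻¹ * η = η - 1 := by rw [inv_inv]; exact hαη
      rw [one_div, hq] at hH2
      calc L ^ η ≤ _ := hH2
        _ = (ENNReal.ofReal t) ^ (η - 1)
            * ∫⁻ s in Ioc (0:ℝ) t, (ENNReal.ofReal (G s ω)) ^ η := mul_comm _ _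
    -- combine
    calc f2 ω = ENNReal.ofReal (I ω ^ η) * ENNReal.ofReal (G t ω ^ (-η)) := by
          rw [show f2 ω = ENNReal.ofReal (I ω ^ η * G t ω ^ (-η)) from rfl,
            ENNReal.ofReal_mul (Real.rpow_nonneg (hInn ω) _)]
      _ = (ENNReal.ofReal (I ω)) ^ η * ENNReal.ofReal (G t ω ^ (-η)) := by
          rw [ENNReal.ofReal_rpow_of_nonneg (hInn ω) hηpos.le]
      _ ≤ ((ENNReal.ofReal t) ^ (η - 1)
            * ∫⁻ s in Ioc (0:ℝ) t, (ENNReal.ofReal (G s ω)) ^ η)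
            * ENNReal.ofReal (G t ω ^ (-η)) := by
          exact mul_le_mul_left (le_trans (ENNReal.rpow_le_rpow step1 hηpos.le) step2) _
      _ = (ENNReal.ofReal t) ^ (η - 1)
            * ∫⁻ s in Ioc (0:ℝ) t, ENNReal.ofReal (G s ω ^ η * G t ω ^ (-η)) := by
          rw [mul_assoc]
          congr 1
          rw [← lintegral_mul_const' _ _ ENNReal.ofReal_ne_top]
          refine lintegral_congr fun s => ?_
          rw [ENNReal.ofReal_mul (Real.rpow_nonneg (hGpos s ω).le _),
            ENNReal.ofReal_rpow_of_nonneg (hGpos s ω).le hηpos.le]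
  -- second expectation bound
  have hT2 : ∫⁻ ω, f2 ω ∂P ≤ ENNReal.ofReal (t ^ η) := by
    have hswapmeas : Measurable fun z : Ω × ℝ =>
        ENNReal.ofReal (G z.2 z.1 ^ η * G t z.1 ^ (-η)) := by
      apply Measurable.ennreal_ofReal
      exact ((mr η).comp (measG.comp measurable_swap)).mul
        ((mr (-η)).comp ((measGr t).comp measurable_fst))
    calc ∫⁻ ω, f2 ω ∂P
        ≤ ∫⁻ ω, ((ENNReal.ofReal t) ^ (η - 1)
            * ∫⁻ s in Ioc (0:ℝ) t, ENNReal.ofReal (G s ω ^ η * G t ω ^ (-η))) ∂P :=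
          lintegral_mono holder
      _ = (ENNReal.ofReal t) ^ (η - 1)
            * ∫⁻ ω, (∫⁻ s in Ioc (0:ℝ) t, ENNReal.ofReal (G s ω ^ η * G t ω ^ (-η))) ∂P :=
          lintegral_const_mul' _ _ (ENNReal.rpow_ne_top_of_nonneg (by linarith) ENNReal.ofReal_ne_top)
      _ = (ENNReal.ofReal t) ^ (η - 1)
            * ∫⁻ s in Ioc (0:ℝ) t, ∫⁻ ω, ENNReal.ofReal (G s ω ^ η * G t ω ^ (-η)) ∂P := by
          rw [lintegral_lintegral_swap hswapmeas.aemeasurable]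
      _ ≤ (ENNReal.ofReal t) ^ (η - 1) * ∫⁻ _ in Ioc (0:ℝ) t, (1:ℝ≥0∞) ∂(volume : Measure ℝ) := by
          refine mul_le_mul_right ?_ _
          refine setLIntegral_mono measurable_one fun s hs => ?_
          exact hratio s t hs.1.le hs.2
      _ = (ENNReal.ofReal t) ^ (η - 1) * ENNReal.ofReal t := by
          rw [setLIntegral_one, Real.volume_Ioc, sub_zero]
      _ = ENNReal.ofReal (t ^ η) := by
          rcases eq_or_lt_of_le ht with rfl | ht0
          · simp [ENNReal.zero_rpow_of_pos (show (0:ℝ) < η - 1 by linarith),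
              Real.zero_rpow hηpos.ne']
          · rw [ENNReal.ofReal_rpow_of_pos ht0, ← ENNReal.ofReal_mul (Real.rpow_nonneg ht _)]
            congr 1
            rw [show η = η - 1 + 1 by ring, Real.rpow_add_one ht0.ne']
            ring_nf
  -- final assembly
  calc ∫⁻ ω, ENNReal.ofReal (X x t ω) ∂P
      ≤ ∫⁻ ω, ENNReal.ofReal (2 ^ (η - 1)) *
          (ENNReal.ofReal x * f1 ω + ENNReal.ofReal ((1 - α) ^ η) * f2 ω) ∂P :=
        lintegral_mono hpoint
    _ = ENNReal.ofReal (2 ^ (η - 1)) *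
          (ENNReal.ofReal x * ∫⁻ ω, f1 ω ∂P + ENNReal.ofReal ((1 - α) ^ η) * ∫⁻ ω, f2 ω ∂P) := by
        rw [lintegral_const_mul' _ _ ENNReal.ofReal_ne_top,
          lintegral_add_left (measf1.const_mul _),
          lintegral_const_mul' _ _ ENNReal.ofReal_ne_top,
          lintegral_const_mul' _ _ ENNReal.ofReal_ne_top]
    _ ≤ ENNReal.ofReal (2 ^ (η - 1)) *
          (ENNReal.ofReal x * 1 + 1 * ENNReal.ofReal (t ^ η)) := by
        gcongr
        exact ENNReal.ofReal_le_one.2 (Real.rpow_le_one hα'.le (by linarith) hηpos.le)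
    _ = ENNReal.ofReal ((2:ℝ) ^ (η - 1) * (x + t ^ η)) := by
        rw [mul_one, one_mul, ← ENNReal.ofReal_add hx.le (Real.rpow_nonneg ht _),
          ← ENNReal.ofReal_mul (by positivity)]
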